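/- Let ζ :⊆ Y ⇉ ℕ^ℕ be a probe for a represented space Y and let T :⊆ X ⇉ Y be a partial multivalued function. Suppose the class C of all partial multivalued functions f between represented spaces for which player II has a winning strategy in the (ζ, T)-Wadge game for f is closed downwards under ≤_W^c. Then C = {f : f ≤_W^c ζ ∘ T}, and ζ ∘ T is a cylinder and is transparent. -/
import Mathlib


open Filter Topology

/-! ### Partial functions on Baire space -/

/-- A partial function on Baire space, given by a domain and an underlying total
function (whose values outside the domain are irrelevant). -/
structure PFunB where
  dom : Set (ℕ → ℕ)
  toFun : (ℕ → ℕ) → (ℕ → ℕ)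

/-- A partial function on Baire space is continuous if its underlying function is
continuous on its domain. -/
def PFunB.IsContinuous (F : PFunB) : Prop := ContinuousOn F.toFun F.dom

/-- Composition of partial functions on Baire space. -/
def PFunB.comp (F G : PFunB) : PFunB where
  dom := {p | p ∈ G.dom ∧ G.toFun p ∈ F.dom}
  toFun := fun p => F.toFun (G.toFun p)

/-- A partial function from (Baire space) × (Baire space) to Baire space. -/
structure PFunB2 where
  dom : Set ((ℕ → ℕ) × (ℕ → ℕ))
  toFun : (ℕ → ℕ) × (ℕ → ℕ) → (ℕ → ℕ)

def PFunB2.IsContinuous (K : PFunB2) : Prop := ContinuousOn K.toFun K.dom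

/-! ### Coding of sequences -/

/-- The `n`-th column of `p : ℕ → ℕ`, via the standard pairing bijection. -/
def col (p : ℕ → ℕ) (n : ℕ) : ℕ → ℕ := fun k => p (Nat.pair n k)

/-- Interleaving pairing of two elements of Baire space. -/
def pairB (p q : ℕ → ℕ) : ℕ → ℕ := fun n => if n % 2 = 0 then p (n / 2) else q (n / 2)

def leftB (r : ℕ → ℕ) : ℕ → ℕ := fun n => r (2 * n)

def rightB (r : ℕ → ℕ) : ℕ → ℕ := fun n => r (2 * n + 1)

theorem leftB_pairB (p q : ℕ → ℕ) : leftB (pairB p q) = p := by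
  funext n
  show (if (2 * n) % 2 = 0 then p ((2 * n) / 2) else q ((2 * n) / 2)) = p n
  rw [if_pos (by omega)]
  congr 1
  omega

theorem rightB_pairB (p q : ℕ → ℕ) : rightB (pairB p q) = q := by
  funext n
  show (if (2 * n + 1) % 2 = 0 then p ((2 * n + 1) / 2) else q ((2 * n + 1) / 2)) = q n
  rw [if_neg (by omega)]
  congr 1
  omega

/-! ### Represented spaces -/

/-- A represented space: a set `X` together with a partial surjection from Baire space
onto `X` (modelled as a total map together with a domain, such that every point has a
name in the domain). -/
structure RepSpace (X : Type u) where
  dom : Set (ℕ → ℕ)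
  map : (ℕ → ℕ) → X
  surj : ∀ x : X, ∃ p ∈ dom, map p = x

/-- Baire space with the identity representation. -/
def idRep : RepSpace (ℕ → ℕ) := ⟨Set.univ, id, fun x => ⟨x, trivial, rfl⟩⟩

/-- The representation of `X`, viewed as a partial multivalued function from Baire
space to `X` (with empty value outside the domain). -/
def RepSpace.toMV {X : Type u} (δ : RepSpace X) : (ℕ → ℕ) → Set X :=
  fun p => {x | p ∈ δ.dom ∧ δ.map p = x}

/-- Product of represented spaces, via the interleaving pairing homeomorphism. -/
def RepSpace.prod {X : Type u} {Y : Type v} (δX : RepSpace X) (δY : RepSpace Y) :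
    RepSpace (X × Y) where
  dom := {r | leftB r ∈ δX.dom ∧ rightB r ∈ δY.dom}
  map := fun r => (δX.map (leftB r), δY.map (rightB r))
  surj := by
    rintro ⟨x, y⟩
    obtain ⟨p, hp, hpx⟩ := δX.surj x
    obtain ⟨q, hq, hqy⟩ := δY.surj y
    refine ⟨pairB p q, ⟨?_, ?_⟩, ?_⟩
    · rw [leftB_pairB]; exact hp
    · rw [rightB_pairB]; exact hq
    · show (δX.map (leftB (pairB p q)), δY.map (rightB (pairB p q))) = (x, y)
      rw [leftB_pairB, rightB_pairB, hpx, hqy]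

/-- The represented space of sequences in `X`: `δ(p) = (δ_X((p)_n))_n`. -/
def RepSpace.seq {X : Type u} (δ : RepSpace X) : RepSpace (ℕ → X) where
  dom := {p | ∀ n, col p n ∈ δ.dom}
  map := fun p n => δ.map (col p n)
  surj := by
    intro x
    choose q hq hmap using fun n => δ.surj (x n)
    have hcol : ∀ n, col (fun m => q (Nat.unpair m).1 (Nat.unpair m).2) n = q n := by
      intro n; funext k; simp [col]
    refine ⟨fun m => q (Nat.unpair m).1 (Nat.unpair m).2, fun n => ?_, ?_⟩
    · rw [hcol]; exact hq n
    · funext n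
      show δ.map (col (fun m => q (Nat.unpair m).1 (Nat.unpair m).2) n) = x n
      rw [hcol]; exact hmap n

/-! ### Partial multivalued functions -/

/-- Composition of partial multivalued functions (with the domain convention
`dom (f ∘ g) = {x ∈ dom g : g x ⊆ dom f}`; a partial multivalued function is modelled
as a `Set`-valued function whose domain is the set of points with nonempty value). -/
def MComp {X : Type u} {Y : Type v} {Z : Type w} (f : Y → Set Z) (g : X → Set Y) :
    X → Set Z :=
  fun x => {z | (∀ y ∈ g x, (f y).Nonempty) ∧ ∃ y ∈ g x, z ∈ f y}

/-- `f` tightens `g`: `dom g ⊆ dom f` and `f x ⊆ g x` for every `x ∈ dom g`. -/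
def Tightens {X : Type u} {Y : Type v} (f g : X → Set Y) : Prop :=
  ∀ x, (g x).Nonempty → (f x).Nonempty ∧ f x ⊆ g x

/-- `F` is a realizer of the partial multivalued function `f`. -/
def Realizes {X : Type u} {Y : Type v} (δX : RepSpace X) (δY : RepSpace Y)
    (F : PFunB) (f : X → Set Y) : Prop :=
  ∀ p ∈ δX.dom, (f (δX.map p)).Nonempty →
    p ∈ F.dom ∧ F.toFun p ∈ δY.dom ∧ δY.map (F.toFun p) ∈ f (δX.map p)

/-- A partial multivalued function between represented spaces is continuous if it has a
continuous realizer. -/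
def MCts {X : Type u} {Y : Type v} (δX : RepSpace X) (δY : RepSpace Y)
    (f : X → Set Y) : Prop :=
  ∃ F : PFunB, F.IsContinuous ∧ Realizes δX δY F f

/-- Strong continuous Weihrauch reducibility `f ≤_sW^c g`. -/
def StrongWc {A : Type u} {B : Type v} {C : Type w} {D : Type x}
    (δA : RepSpace A) (δB : RepSpace B) (δC : RepSpace C) (δD : RepSpace D)
    (f : A → Set B) (g : C → Set D) : Prop :=
  ∃ K H : PFunB, K.IsContinuous ∧ H.IsContinuous ∧
    ∀ G : PFunB, Realizes δC δD G g → Realizes δA δB (K.comp (G.comp H)) f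

/-- Continuous Weihrauch reducibility `f ≤_W^c g`. -/
def Wc {A : Type u} {B : Type v} {C : Type w} {D : Type x}
    (δA : RepSpace A) (δB : RepSpace B) (δC : RepSpace C) (δD : RepSpace D)
    (f : A → Set B) (g : C → Set D) : Prop :=
  ∃ (K : PFunB2) (H : PFunB), K.IsContinuous ∧ H.IsContinuous ∧
    ∀ G : PFunB, Realizes δC δD G g →
      Realizes δA δB
        ⟨{p | p ∈ H.dom ∧ H.toFun p ∈ G.dom ∧ (p, G.toFun (H.toFun p)) ∈ K.dom},
          fun p => K.toFun (p, G.toFun (H.toFun p))⟩ f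

/-- Continuous Weihrauch equivalence `f ≡_W^c g`. -/
def WcEquiv {A : Type u} {B : Type v} {C : Type w} {D : Type x}
    (δA : RepSpace A) (δB : RepSpace B) (δC : RepSpace C) (δD : RepSpace D)
    (f : A → Set B) (g : C → Set D) : Prop :=
  Wc δA δB δC δD f g ∧ Wc δC δD δA δB g f

/-- `id_{ℕ^ℕ} × g` for a partial multivalued `g`. -/
def idProd {C : Type u} {D : Type v} (g : C → Set D) :
    (ℕ → ℕ) × C → Set ((ℕ → ℕ) × D) :=
  fun pc => {qd | qd.1 = pc.1 ∧ qd.2 ∈ g pc.2}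

/-- `f` is a cylinder if `id_{ℕ^ℕ} × f ≤_sW^c f`. -/
def IsCylinder {X : Type u} {Y : Type v} (δX : RepSpace X) (δY : RepSpace Y)
    (f : X → Set Y) : Prop :=
  StrongWc (idRep.prod δX) (idRep.prod δY) δX δY (idProd f) f

/-- `T :⊆ X ⇉ Y` is transparent: for every continuous `g :⊆ Y ⇉ Y` there is a
continuous `f :⊆ X ⇉ X` with `T ∘ f ⪯ g ∘ T`. -/
def Transparent {X : Type u} {Y : Type v} (δX : RepSpace X) (δY : RepSpace Y)
    (T : X → Set Y) : Prop :=
  ∀ g : Y → Set Y, MCts δY δY g →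
    ∃ f : X → Set X, MCts δX δX f ∧ Tightens (MComp T f) (MComp g T)

/-- `ζ :⊆ Y ⇉ ℕ^ℕ` is a probe for `Y`: it is continuous, and for every continuous
`f :⊆ Y ⇉ ℕ^ℕ` there is a continuous `e :⊆ Y ⇉ Y` with `ζ ∘ e ⪯ f`. -/
def IsProbe {Y : Type u} (δY : RepSpace Y) (ζ : Y → Set (ℕ → ℕ)) : Prop :=
  MCts δY idRep ζ ∧
    ∀ f : Y → Set (ℕ → ℕ), MCts δY idRep f →
      ∃ e : Y → Set Y, MCts δY δY e ∧ Tightens (MComp ζ e) f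

/-- Parallelization of a partial multivalued function. -/
def Parallel {X : Type u} {Y : Type v} (f : X → Set Y) : (ℕ → X) → Set (ℕ → Y) :=
  fun xs => {ys | ∀ n, ys n ∈ f (xs n)}

/-! ### Games -/

/-- A strategy for player II: to each finite sequence of I's moves it assigns a natural
number or a pass (`none`). -/
abbrev Strategy := List ℕ → Option ℕ

/-- The move of player II (following `σ`) after I has played `x 0, …, x n`. -/
def respond (σ : Strategy) (x : ℕ → ℕ) (n : ℕ) : Option ℕ :=
  σ (List.ofFn fun i : Fin (n + 1) => x i)

/-- Player II plays natural numbers at infinitely many rounds of the run against `x`. -/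
def InfPlays (σ : Strategy) (x : ℕ → ℕ) : Prop :=
  {n | (respond σ x n).isSome = true}.Infinite

/-- The element of Baire space built by player II in the run against `x`
(the subsequence of her non-pass moves). -/
noncomputable def output (σ : Strategy) (x : ℕ → ℕ) : ℕ → ℕ :=
  fun k => (respond σ x (Nat.nth (fun n => (respond σ x n).isSome = true) k)).getD 0

/-- The partial multivalued function `δ_B ∘ ζ ∘ T ∘ δ_X :⊆ ℕ^ℕ ⇉ B` used in the winning
condition of the `(ζ, T)`-Wadge game. -/
def GameMap {X : Type u} {Y : Type v} {B : Type w} (δX : RepSpace X) (δB : RepSpace B)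
    (ζ : Y → Set (ℕ → ℕ)) (T : X → Set Y) : (ℕ → ℕ) → Set B :=
  MComp δB.toMV (MComp ζ (MComp T δX.toMV))

/-- `σ` is a winning strategy for player II in the `(ζ, T)`-Wadge game for `f`:
for every run `x` built by player I with `x ∈ dom (f ∘ δ_A)`, player II plays natural
numbers infinitely often, her output `y` lies in `dom (δ_B ∘ ζ ∘ T ∘ δ_X)`, and
`(δ_B ∘ ζ ∘ T ∘ δ_X)(y) ⊆ (f ∘ δ_A)(x)` (runs with `x ∉ dom (f ∘ δ_A)` are won by II
automatically). -/
def WadgeWinning {X : Type u} {Y : Type v} {A : Type w} {B : Type x}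
    (δX : RepSpace X) (δA : RepSpace A) (δB : RepSpace B)
    (ζ : Y → Set (ℕ → ℕ)) (T : X → Set Y) (f : A → Set B) (σ : Strategy) : Prop :=
  ∀ x : ℕ → ℕ, (MComp f δA.toMV x).Nonempty →
    InfPlays σ x ∧
    (GameMap δX δB ζ T (output σ x)).Nonempty ∧
    GameMap δX δB ζ T (output σ x) ⊆ MComp f δA.toMV x

/-! ### lim, isFinite and the Baire hierarchy -/

/-- The partial function `lim :⊆ ℕ^ℕ → ℕ^ℕ`, `lim(p) = lim_n (p)_n` (pointwise limit),
viewed as a partial multivalued function with singleton values on its domain. -/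
def limFn : (ℕ → ℕ) → Set (ℕ → ℕ) :=
  fun p => {q | ∀ k, ∀ᶠ n in atTop, col p n k = q k}

/-- The space `{0,1}^ℕ` of binary sequences. -/
abbrev BSeq : Type := {p : ℕ → ℕ // ∀ n, p n ≤ 1}

/-- `{0,1}^ℕ` with the identity representation (as a subspace of Baire space). -/
def repBSeq : RepSpace BSeq where
  dom := {p | ∀ n, p n ≤ 1}
  map := fun p => ⟨fun n => min (p n) 1, fun _ => min_le_right _ _⟩
  surj := fun x => ⟨x.1, x.2, Subtype.ext (funext fun n => min_eq_left (x.2 n))⟩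

/-- The two-point space `{0,1}`. -/
abbrev TwoPt : Type := {n : ℕ // n ≤ 1}

/-- The two-point space `{0,1}` represented by `δ(p) = p 0`. -/
def repTwo : RepSpace TwoPt where
  dom := {p | p 0 ≤ 1}
  map := fun p => ⟨min (p 0) 1, min_le_right _ _⟩
  surj := fun x => ⟨fun _ => x.1, x.2, Subtype.ext (min_eq_left x.2)⟩

open Classical in
/-- `isFinite(p) = 1` iff `{n : p n = 1}` is finite. -/
noncomputable def isFinite : BSeq → TwoPt :=
  fun p => if {n | p.1 n = 1}.Finite then ⟨1, le_refl 1⟩ else ⟨0, Nat.zero_le 1⟩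

/-- The finite levels of the Baire hierarchy: Baire class 0 functions are the continuous
ones, and Baire class `n+1` functions are pointwise limits of sequences of Baire class
`n` functions. -/
def BaireClass : ℕ → ((ℕ → ℕ) → (ℕ → ℕ)) → Prop
  | 0, f => Continuous f
  | n + 1, f => ∃ g : ℕ → (ℕ → ℕ) → (ℕ → ℕ),
      (∀ k, BaireClass n (g k)) ∧ ∀ x, Tendsto (fun k => g k x) atTop (𝓝 (f x))

/-! ### Auxiliary lemmas for the main theorem -/

section Aux

theorem mcomp_congr {X X' Y Z : Type*} {f : Y → Set Z} {g : X → Set Y} {g' : X' → Set Y}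
    {x : X} {x' : X'} (h : g x = g' x') : MComp f g x = MComp f g' x' := by
  simp only [MComp, h]

theorem mcomp_nonempty {X Y Z : Type*} {f : Y → Set Z} {g : X → Set Y} {x : X} :
    (MComp f g x).Nonempty ↔ (g x).Nonempty ∧ ∀ y ∈ g x, (f y).Nonempty := by
  constructor
  · rintro ⟨z, hall, y, hy, _⟩
    exact ⟨⟨y, hy⟩, hall⟩
  · rintro ⟨⟨y, hy⟩, hall⟩
    obtain ⟨z, hz⟩ := hall y hy
    exact ⟨z, hall, y, hy, hz⟩

theorem mcomp_assoc {W X Y Z : Type*} (f : Y → Set Z) (g : X → Set Y) (h : W → Set X) :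
    MComp f (MComp g h) = MComp (MComp f g) h := by
  funext w
  ext z
  constructor
  · rintro ⟨h1, y, ⟨hall, x, hx, hyg⟩, hzf⟩
    have hmem : ∀ x' ∈ h w, ∀ y' ∈ g x', y' ∈ MComp g h w := by
      intro x' hx' y' hy'
      exact ⟨hall, x', hx', hy'⟩
    refine ⟨?_, x, hx, ?_⟩
    · intro x' hx'
      obtain ⟨y', hy'⟩ := hall x' hx'
      obtain ⟨z', hz'⟩ := h1 y' (hmem x' hx' y' hy')
      exact ⟨z', fun y'' hy'' => h1 y'' (hmem x' hx' y'' hy''), y', hy', hz'⟩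
    · exact ⟨fun y'' hy'' => h1 y'' (hmem x hx y'' hy''), y, hyg, hzf⟩
  · rintro ⟨h1, x, hx, ⟨hall, y, hy, hzf⟩⟩
    have hgne : ∀ x' ∈ h w, (g x').Nonempty := by
      intro x' hx'
      obtain ⟨z', _, y', hy', _⟩ := Set.nonempty_def.mp (h1 x' hx')
      exact ⟨y', hy'⟩
    have hfne : ∀ y' ∈ MComp g h w, (f y').Nonempty := by
      rintro y' ⟨_, x', hx', hy'⟩
      obtain ⟨_, hall'⟩ := Set.nonempty_def.mp (h1 x' hx')
      exact hall'.1 y' hy'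
    refine ⟨hfne, y, ⟨hgne, x, hx, hy⟩, hzf⟩

theorem toMV_nonempty {X : Type*} {δ : RepSpace X} {p : ℕ → ℕ} :
    (δ.toMV p).Nonempty ↔ p ∈ δ.dom := by
  constructor
  · rintro ⟨x, hx, _⟩; exact hx
  · intro h; exact ⟨δ.map p, h, rfl⟩

theorem mcomp_toMV {X Z : Type*} {δ : RepSpace X} (h : X → Set Z) {p : ℕ → ℕ}
    (hp : p ∈ δ.dom) : MComp h δ.toMV p = h (δ.map p) := by
  ext z
  constructor
  · rintro ⟨_, y, ⟨_, rfl⟩, hz⟩; exact hz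
  · intro hz
    exact ⟨fun y hy => hy.2 ▸ ⟨z, hz⟩, δ.map p, ⟨hp, rfl⟩, hz⟩

theorem mem_dom_of_mcomp_toMV {X Z : Type*} {δ : RepSpace X} {h : X → Set Z} {p : ℕ → ℕ}
    (hne : (MComp h δ.toMV p).Nonempty) : p ∈ δ.dom := by
  obtain ⟨z, _, y, hy, _⟩ := hne
  exact hy.1

theorem mcomp_idRepMV {X : Type*} (h : X → Set (ℕ → ℕ)) (x : X) :
    MComp idRep.toMV h x = h x := by
  ext z
  constructor
  · rintro ⟨_, q, hq, _, hqz⟩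
    exact hqz ▸ hq
  · intro hz
    exact ⟨fun q _ => ⟨q, trivial, rfl⟩, z, hz, trivial, rfl⟩

/-! ### Continuity of the output of a strategy -/

theorem respond_congr (σ : Strategy) {x y : ℕ → ℕ} {n : ℕ} (h : ∀ i ≤ n, x i = y i) :
    respond σ x n = respond σ y n := by
  unfold respond
  congr 1
  congr 1
  funext i
  exact h i (Nat.lt_succ_iff.mp i.isLt)

theorem count_congr' {p q : ℕ → Prop} [DecidablePred p] [DecidablePred q] {n : ℕ}
    (h : ∀ i < n, (p i ↔ q i)) : Nat.count p n = Nat.count q n := by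
  induction n with
  | zero => simp
  | succ m ih =>
    rw [Nat.count_succ, Nat.count_succ, ih fun i hi => h i (by omega)]
    have hm := h m (Nat.lt_succ_self m)
    by_cases hp : p m
    · rw [if_pos hp, if_pos (hm.mp hp)]
    · rw [if_neg hp, if_neg (fun hq => hp (hm.mpr hq))]

theorem output_congr (σ : Strategy) {x y : ℕ → ℕ} (hx : InfPlays σ x) (k : ℕ)
    (h : ∀ i ≤ Nat.nth (fun n => (respond σ x n).isSome = true) k, x i = y i) :
    output σ y k = output σ x k := by
  classical
  set P : ℕ → Prop := fun n => (respond σ x n).isSome = true with hPdef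
  set Q : ℕ → Prop := fun n => (respond σ y n).isSome = true with hQdef
  set N := Nat.nth P k with hNdef
  have hresp : ∀ n ≤ N, respond σ y n = respond σ x n := fun n hn =>
    (respond_congr σ fun i hi => h i (hi.trans hn)).symm
  have hxinf : (setOf P).Infinite := hx
  have hPN : P N := Nat.nth_mem_of_infinite hxinf k
  have hQN : Q N := by
    show (respond σ y N).isSome = true
    rw [hresp N le_rfl]; exact hPN
  have hcnt : Nat.count P N = k := Nat.count_nth_of_infinite hxinf k
  have hcntQ : Nat.count Q N = k := by
    rw [count_congr' (p := Q) (q := P) fun i hi => by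
      show (respond σ y i).isSome = true ↔ (respond σ x i).isSome = true
      rw [hresp i hi.le]]
    exact hcnt
  have hnthQ : Nat.nth Q k = N := by
    conv_lhs => rw [← hcntQ]
    exact Nat.nth_count hQN
  show (respond σ y (Nat.nth Q k)).getD 0 = (respond σ x (Nat.nth P k)).getD 0
  rw [hnthQ, ← hNdef, hresp N le_rfl]

theorem continuousOn_output (σ : Strategy) {s : Set (ℕ → ℕ)}
    (hs : ∀ x ∈ s, InfPlays σ x) : ContinuousOn (output σ) s := by
  intro x hxs
  rw [ContinuousWithinAt, tendsto_pi_nhds]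
  intro k
  set N := Nat.nth (fun n => (respond σ x n).isSome = true) k with hN
  have hopen : IsOpen {y : ℕ → ℕ | ∀ i ≤ N, y i = x i} := by
    have heq : {y : ℕ → ℕ | ∀ i ≤ N, y i = x i}
        = ⋂ i : Fin (N + 1), {y : ℕ → ℕ | y i.1 = x i.1} := by
      ext y
      simp only [Set.mem_setOf_eq, Set.mem_iInter]
      exact ⟨fun hy i => hy i.1 (Nat.lt_succ_iff.mp i.isLt),
        fun hy i hi => hy ⟨i, Nat.lt_succ_iff.mpr hi⟩⟩
    rw [heq]
    refine isOpen_iInter_of_finite fun i => ?_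
    have h2 : IsOpen ((fun y : ℕ → ℕ => y (i : ℕ)) ⁻¹' {x (i : ℕ)}) :=
      IsOpen.preimage (continuous_apply (i : ℕ)) (isOpen_discrete {x (i : ℕ)})
    exact h2
  have hmem : {y : ℕ → ℕ | ∀ i ≤ N, y i = x i} ∈ 𝓝 x :=
    hopen.mem_nhds fun i _ => rfl
  have hev : ∀ᶠ y in 𝓝[s] x, output σ y k = output σ x k := by
    apply Filter.Eventually.filter_mono nhdsWithin_le_nhds
    filter_upwards [hmem] with y hy
    exact output_congr σ (hs x hxs) k fun i hi => (hy i hi).symm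
  exact Filter.Tendsto.congr' (hev.mono fun y hy => hy.symm) tendsto_const_nhds

/-! ### The copying strategy -/

def copyStrat : Strategy := fun l => l[l.length - 1]?

theorem respond_copy (x : ℕ → ℕ) (n : ℕ) : respond copyStrat x n = some (x n) := by
  show (List.ofFn fun i : Fin (n + 1) => x i)[(List.ofFn fun i : Fin (n + 1) => x i).length - 1]? = some (x n)
  rw [List.length_ofFn, Nat.add_sub_cancel, List.getElem?_ofFn]
  simp [List.ofFnNthVal, Nat.lt_succ_self]

theorem infPlays_copy (x : ℕ → ℕ) : InfPlays copyStrat x := by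
  have heq : {n | (respond copyStrat x n).isSome = true} = Set.univ := by
    ext n; simp [respond_copy]
  show {n | (respond copyStrat x n).isSome = true}.Infinite
  rw [heq]
  exact Set.infinite_univ

theorem output_copy (x : ℕ → ℕ) : output copyStrat x = x := by
  classical
  funext k
  have hp : ∀ n, (respond copyStrat x n).isSome = true := fun n => by
    rw [respond_copy]; rfl
  have hcount : ∀ n, Nat.count (fun n => (respond copyStrat x n).isSome = true) n = n := by
    intro n
    induction n with
    | zero => simp
    | succ m ih => rw [Nat.count_succ, ih, if_pos (hp m)]
  have hnth : Nat.nth (fun n => (respond copyStrat x n).isSome = true) k = k := by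
    have h := Nat.nth_count (p := fun n => (respond copyStrat x n).isSome = true) (hp k)
    rwa [hcount k] at h
  show (respond copyStrat x (Nat.nth (fun n => (respond copyStrat x n).isSome = true) k)).getD 0 = x k
  rw [hnth, respond_copy]
  rfl

end Aux

section Game

variable {X Y : Type} (δX : RepSpace X) (ζ : Y → Set (ℕ → ℕ)) (T : X → Set Y)

theorem gameMap_eq {B : Type} (δB : RepSpace B) {y : ℕ → ℕ} (hy : y ∈ δX.dom) :
    GameMap δX δB ζ T y = MComp δB.toMV (MComp ζ T) (δX.map y) := by
  have h : MComp ζ (MComp T δX.toMV) y = MComp ζ T (δX.map y) := by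
    rw [mcomp_assoc, mcomp_toMV _ hy]
  exact mcomp_congr h

theorem gameMap_dom {B : Type} {δB : RepSpace B} {y : ℕ → ℕ}
    (h : (GameMap δX δB ζ T y).Nonempty) : y ∈ δX.dom := by
  obtain ⟨b, _, q, hq, _⟩ := h
  obtain ⟨_, w, hw, _⟩ := hq
  obtain ⟨_, x', hx', _⟩ := hw
  exact hx'.1

theorem gameMap_idRep {y : ℕ → ℕ} (hy : y ∈ δX.dom) :
    GameMap δX idRep ζ T y = MComp ζ T (δX.map y) := by
  rw [gameMap_eq δX ζ T idRep hy, mcomp_idRepMV]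

theorem copy_winning : WadgeWinning δX δX idRep ζ T (MComp ζ T) copyStrat := by
  intro x hx
  have hxdom : x ∈ δX.dom := mem_dom_of_mcomp_toMV hx
  rw [output_copy]
  refine ⟨infPlays_copy x, ?_, ?_⟩
  · rw [gameMap_idRep δX ζ T hxdom]
    rw [mcomp_toMV (MComp ζ T) hxdom] at hx
    exact hx
  · rw [gameMap_idRep δX ζ T hxdom, mcomp_toMV (MComp ζ T) hxdom]

/-- The key consequence of a winning strategy: composed with any realizer of
`ζ ∘ T`, the output of the strategy produces a name of a value of `f`. -/
theorem game_realize {A B : Type} {δA : RepSpace A} {δB : RepSpace B}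
    {f : A → Set B} {σ : Strategy} (hσ : WadgeWinning δX δA δB ζ T f σ)
    {G : PFunB} (hG : Realizes δX idRep G (MComp ζ T))
    {p : ℕ → ℕ} (hp : p ∈ δA.dom) (hf : (f (δA.map p)).Nonempty) :
    InfPlays σ p ∧ output σ p ∈ G.dom ∧
      G.toFun (output σ p) ∈ δB.dom ∧ δB.map (G.toFun (output σ p)) ∈ f (δA.map p) := by
  have hpre : (MComp f δA.toMV p).Nonempty := by rw [mcomp_toMV _ hp]; exact hf
  obtain ⟨hinf, hne, hsub⟩ := hσ p hpre
  set y := output σ p with hy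
  have hydom : y ∈ δX.dom := gameMap_dom δX ζ T hne
  rw [gameMap_eq δX ζ T δB hydom] at hne hsub
  obtain ⟨b, hall, q0, hq0, _⟩ := hne
  have hζTne : (MComp ζ T (δX.map y)).Nonempty := ⟨q0, hq0⟩
  have hdom : ∀ q ∈ MComp ζ T (δX.map y), q ∈ δB.dom := fun q hq =>
    toMV_nonempty.mp (hall q hq)
  obtain ⟨hyG, _, hmem⟩ := hG y hydom hζTne
  have hmem' : G.toFun y ∈ MComp ζ T (δX.map y) := hmem
  have hqB : G.toFun y ∈ δB.dom := hdom _ hmem'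
  have hin : δB.map (G.toFun y) ∈ MComp δB.toMV (MComp ζ T) (δX.map y) :=
    ⟨fun q hq => toMV_nonempty.mpr (hdom q hq), G.toFun y, hmem', hqB, rfl⟩
  have := hsub hin
  rw [mcomp_toMV _ hp] at this
  exact ⟨hinf, hyG, hqB, this⟩

end Game

/-! ### Continuity facts for pairing -/

theorem continuous_leftB : Continuous leftB :=
  continuous_pi fun n => continuous_apply (2 * n)

theorem continuous_rightB : Continuous rightB :=
  continuous_pi fun n => continuous_apply (2 * n + 1)

theorem continuous_pairB_comp : Continuous fun rq : (ℕ → ℕ) × (ℕ → ℕ) =>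
    pairB (leftB rq.1) rq.2 := by
  apply continuous_pi
  intro n
  unfold pairB leftB
  by_cases h : n % 2 = 0
  · simp only [h, if_true]
    exact (continuous_apply _).comp continuous_fst
  · simp only [h, if_false]
    exact (continuous_apply _).comp continuous_snd
/-- If the class of all partial multivalued functions `f` for which player II has a
winning strategy in the `(ζ, T)`-Wadge game for `f` is closed downwards under `≤_W^c`,
then it is exactly the lower cone of `ζ ∘ T`, and `ζ ∘ T` is a cylinder and is
transparent. -/
theorem wadge_game_lower_cone {X Y : Type} (δX : RepSpace X) (δY : RepSpace Y)
    (ζ : Y → Set (ℕ → ℕ)) (hζ : IsProbe δY ζ) (T : X → Set Y)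
    (hclosed : ∀ (A B A' B' : Type) (δA : RepSpace A) (δB : RepSpace B)
      (δA' : RepSpace A') (δB' : RepSpace B') (f : A → Set B) (g : A' → Set B'),
      (∃ σ : Strategy, WadgeWinning δX δA' δB' ζ T g σ) →
      Wc δA δB δA' δB' f g →
      ∃ σ : Strategy, WadgeWinning δX δA δB ζ T f σ) :
    (∀ (A B : Type) (δA : RepSpace A) (δB : RepSpace B) (f : A → Set B),
      (∃ σ : Strategy, WadgeWinning δX δA δB ζ T f σ) ↔
        Wc δA δB δX idRep f (MComp ζ T)) ∧
    IsCylinder δX idRep (MComp ζ T) ∧ Transparent δX idRep (MComp ζ T) := by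
  have hcopy : ∃ σ : Strategy, WadgeWinning δX δX idRep ζ T (MComp ζ T) σ :=
    ⟨copyStrat, copy_winning δX ζ T⟩
  refine ⟨?_, ?_, ?_⟩
  · -- the lower cone characterization
    intro A B δA δB f
    constructor
    · rintro ⟨σ, hσ⟩
      refine ⟨⟨Set.univ, fun pq => pq.2⟩,
        ⟨{p | p ∈ δA.dom ∧ (f (δA.map p)).Nonempty}, output σ⟩,
        continuous_snd.continuousOn,
        continuousOn_output σ (fun p hp =>
          (hσ p (by rw [mcomp_toMV _ hp.1]; exact hp.2)).1), ?_⟩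
      intro G hG p hp hf
      obtain ⟨hinf, hyG, hqB, hqf⟩ := game_realize δX ζ T hσ hG hp hf
      exact ⟨⟨⟨hp, hf⟩, hyG, trivial⟩, hqB, hqf⟩
    · intro hWc
      exact hclosed A B X (ℕ → ℕ) δA δB δX idRep f (MComp ζ T) hcopy hWc
  · -- cylinder
    have wc_idProd : Wc (idRep.prod δX) (idRep.prod idRep) δX idRep
        (idProd (MComp ζ T)) (MComp ζ T) := by
      refine ⟨⟨Set.univ, fun rq => pairB (leftB rq.1) rq.2⟩, ⟨Set.univ, rightB⟩,
        continuous_pairB_comp.continuousOn, continuous_rightB.continuousOn, ?_⟩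
      intro G hG r hr hf
      obtain ⟨-, hr2⟩ := hr
      have hζne : (MComp ζ T (δX.map (rightB r))).Nonempty := by
        obtain ⟨⟨p', d⟩, hd1, hd2⟩ := hf
        exact ⟨d, hd2⟩
      obtain ⟨hGdom, -, hq⟩ := hG (rightB r) hr2 hζne
      have hq' : G.toFun (rightB r) ∈ MComp ζ T (δX.map (rightB r)) := hq
      refine ⟨⟨trivial, hGdom, trivial⟩, ⟨trivial, trivial⟩, ?_, ?_⟩
      · show idRep.map (leftB (pairB (leftB r) (G.toFun (rightB r)))) = idRep.map (leftB r)
        rw [leftB_pairB]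
      · show idRep.map (rightB (pairB (leftB r) (G.toFun (rightB r)))) ∈ _
        rw [show idRep.map (rightB (pairB (leftB r) (G.toFun (rightB r))))
          = G.toFun (rightB r) from by rw [rightB_pairB]; rfl]
        exact hq'
    obtain ⟨σ, hσ⟩ := hclosed ((ℕ → ℕ) × X) ((ℕ → ℕ) × (ℕ → ℕ)) X (ℕ → ℕ)
      (idRep.prod δX) (idRep.prod idRep) δX idRep (idProd (MComp ζ T)) (MComp ζ T)
      hcopy wc_idProd
    refine ⟨⟨Set.univ, id⟩,
      ⟨{r | r ∈ (idRep.prod δX).dom ∧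
          ((idProd (MComp ζ T)) ((idRep.prod δX).map r)).Nonempty}, output σ⟩,
      continuous_id.continuousOn,
      continuousOn_output σ (fun r hr =>
        (hσ r (by rw [mcomp_toMV _ hr.1]; exact hr.2)).1), ?_⟩
    intro G hG r hr hf
    obtain ⟨hinf, hyG, hqB, hqf⟩ := game_realize δX ζ T hσ hG hr hf
    exact ⟨⟨⟨⟨hr, hf⟩, hyG⟩, trivial⟩, hqB, hqf⟩
  · -- transparency
    rintro g ⟨Gg, hGgc, hGgr⟩
    have wc_g : Wc δX idRep δX idRep (MComp g (MComp ζ T)) (MComp ζ T) := by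
      refine ⟨⟨{pq | pq.2 ∈ Gg.dom}, fun pq => Gg.toFun pq.2⟩, ⟨Set.univ, id⟩,
        hGgc.comp continuous_snd.continuousOn (fun pq h => h),
        continuous_id.continuousOn, ?_⟩
      intro G hG p hp hf
      rw [mcomp_nonempty] at hf
      obtain ⟨hζne, hall⟩ := hf
      obtain ⟨hGdom, -, hq⟩ := hG p hp hζne
      have hq' : G.toFun p ∈ MComp ζ T (δX.map p) := hq
      have hgne : (g (G.toFun p)).Nonempty := hall _ hq'
      obtain ⟨hGgdom, -, hval⟩ := hGgr (G.toFun p) trivial hgne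
      have hval' : Gg.toFun (G.toFun p) ∈ g (G.toFun p) := hval
      exact ⟨⟨trivial, hGdom, hGgdom⟩, trivial, hall, G.toFun p, hq', hval'⟩
    obtain ⟨σ, hσ⟩ := hclosed X (ℕ → ℕ) X (ℕ → ℕ) δX idRep δX idRep
      (MComp g (MComp ζ T)) (MComp ζ T) hcopy wc_g
    have hgame : ∀ p ∈ δX.dom, (MComp g (MComp ζ T) (δX.map p)).Nonempty →
        InfPlays σ p ∧ output σ p ∈ δX.dom ∧
        MComp ζ T (δX.map (output σ p)) = GameMap δX idRep ζ T (output σ p) ∧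
        (GameMap δX idRep ζ T (output σ p)).Nonempty ∧
        GameMap δX idRep ζ T (output σ p) ⊆ MComp g (MComp ζ T) (δX.map p) := by
      intro p hp hne
      have hpre : (MComp (MComp g (MComp ζ T)) δX.toMV p).Nonempty := by
        rw [mcomp_toMV _ hp]; exact hne
      obtain ⟨hinf, hGMne, hGMsub⟩ := hσ p hpre
      have hydom : output σ p ∈ δX.dom := gameMap_dom δX ζ T hGMne
      rw [mcomp_toMV _ hp] at hGMsub
      exact ⟨hinf, hydom, (gameMap_idRep δX ζ T hydom).symm, hGMne, hGMsub⟩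
    refine ⟨fun x => {x' | (MComp g (MComp ζ T) x).Nonempty ∧
      ∃ p, p ∈ δX.dom ∧ δX.map p = x ∧ x' = δX.map (output σ p)}, ?_, ?_⟩
    · -- MCts
      refine ⟨⟨{p | p ∈ δX.dom ∧ (MComp g (MComp ζ T) (δX.map p)).Nonempty}, output σ⟩,
        continuousOn_output σ (fun p hp => (hgame p hp.1 hp.2).1), ?_⟩
      intro p hp hne
      obtain ⟨x', hgne, -⟩ := hne
      obtain ⟨hinf, hydom, -, -, -⟩ := hgame p hp hgne
      exact ⟨⟨hp, hgne⟩, hydom, ⟨hgne, p, hp, rfl, rfl⟩⟩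
    · -- Tightens
      intro x hne
      have key : ∀ x' ∈ {x' | (MComp g (MComp ζ T) x).Nonempty ∧
          ∃ p, p ∈ δX.dom ∧ δX.map p = x ∧ x' = δX.map (output σ p)},
          (MComp ζ T x').Nonempty ∧ MComp ζ T x' ⊆ MComp g (MComp ζ T) x := by
        rintro x' ⟨-, p, hp, rfl, rfl⟩
        obtain ⟨-, hydom, heq, hGMne, hGMsub⟩ := hgame p hp hne
        constructor
        · rw [heq]; exact hGMne
        · rw [heq]; exact hGMsub
      obtain ⟨p₀, hp₀, hp₀x⟩ := δX.surj x
      have hx'₀ : δX.map (output σ p₀) ∈ {x' | (MComp g (MComp ζ T) x).Nonempty ∧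
          ∃ p, p ∈ δX.dom ∧ δX.map p = x ∧ x' = δX.map (output σ p)} :=
        ⟨hne, p₀, hp₀, hp₀x, rfl⟩
      obtain ⟨z₀, hz₀⟩ := (key _ hx'₀).1
      constructor
      · exact ⟨z₀, fun x' h => (key x' h).1, _, hx'₀, hz₀⟩
      · rintro z ⟨-, x', hx', hz⟩
        exact (key x' hx').2 hz
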